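/- The formal power series P(t) = exp(-∑_{k≥1} Tr(a^k) t^k / k), where a = X + X^{-1} in C[Z] and Tr is the constant-term functional, equals (1 + sqrt(1-4t^2))/2 as a formal power series; in particular P satisfies the algebraic equation P^2 - P + t^2 = 0. -/

import Mathlib

open PowerSeries

/-- Exponential of a formal power series (with zero constant term):
`expS f = ∑_k f^k / k!`, defined coefficientwise (only `k ≤ n` contribute to the
`n`-th coefficient when `f` has zero constant term). -/
noncomputable def expS (f : PowerSeries ℂ) : PowerSeries ℂ :=
  PowerSeries.mk fun n =>
    ∑ k ∈ Finset.range (n + 1), (PowerSeries.coeff n (f ^ k)) / (Nat.factorial k)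

/-- `a = X + X⁻¹` in the Laurent polynomial algebra `ℂ[ℤ]`. -/
noncomputable def lau : AddMonoidAlgebra ℂ ℤ :=
  AddMonoidAlgebra.single (1 : ℤ) (1 : ℂ) + AddMonoidAlgebra.single (-1 : ℤ) (1 : ℂ)

/-- `P(t) = exp(-∑_{k≥1} Tr(aᵏ) tᵏ / k)` for `a = X + X⁻¹`, where `Tr` is the
constant-term functional. -/
noncomputable def Pser : PowerSeries ℂ :=
  expS (PowerSeries.mk fun k => if k = 0 then 0 else -((lau ^ k).coeff (0 : ℤ)) / (k : ℂ))

/-! ### Auxiliary material -/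

theorem lau_pow (k : ℕ) : lau ^ k =
    ∑ j ∈ Finset.range (k+1), AddMonoidAlgebra.single ((2*j : ℤ) - k) (k.choose j : ℂ) := by
  rw [lau, add_pow]
  apply Finset.sum_congr rfl
  intro j hj
  rw [Finset.mem_range] at hj
  rw [AddMonoidAlgebra.single_pow, AddMonoidAlgebra.single_pow,
    AddMonoidAlgebra.single_mul_single, AddMonoidAlgebra.natCast_def,
    AddMonoidAlgebra.single_mul_single]
  congr 1
  · simp only [nsmul_eq_mul, mul_one, mul_neg, add_zero]
    omega
  · simp

theorem lau_pow_apply_zero (k : ℕ) :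
    (lau ^ k).coeff (0 : ℤ) = if Even k then ((k.choose (k/2) : ℕ) : ℂ) else 0 := by
  rw [lau_pow, AddMonoidAlgebra.coeff_sum, Finset.sum_apply']
  simp only [AddMonoidAlgebra.coeff_single]
  by_cases hk : Even k
  · obtain ⟨m, hm⟩ := hk
    rw [Finset.sum_eq_single m, Finsupp.single_apply, if_pos (by omega),
      if_pos ⟨m, hm⟩]
    · norm_cast
      congr 1
      omega
    · intro j hj hjm
      rw [Finsupp.single_apply, if_neg]
      omega
    · intro h
      exact absurd (Finset.mem_range.2 (by omega)) h
  · rw [if_neg hk, Finset.sum_eq_zero]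
    intro j hj
    rw [Finsupp.single_apply, if_neg]
    rintro h
    exact hk ⟨j, by omega⟩

/-- The central binomial series `∑ C(2m,m) t^(2m)`, i.e. `1/√(1-4t²)`. -/
noncomputable def Cs : PowerSeries ℂ :=
  PowerSeries.mk fun n => if Even n then ((n.choose (n/2) : ℕ) : ℂ) else 0

theorem Cs_const : constantCoeff Cs = 1 := by
  rw [← coeff_zero_eq_constantCoeff_apply, Cs, coeff_mk]
  norm_num

theorem Cs_key (n : ℕ) :
    ((n:ℂ)+1) * (PowerSeries.coeff (n+1) Cs) =
      4 * n * (if 1 ≤ n then PowerSeries.coeff (n-1) Cs else 0) := by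
  rcases Nat.even_or_odd n with he | ho
  · rw [Cs, coeff_mk, if_neg (by simp [Nat.even_add_one, he])]
    by_cases h1 : 1 ≤ n
    · rw [if_pos h1, coeff_mk, if_neg]
      · ring
      · obtain ⟨m, hm⟩ := he
        rintro ⟨j, hj⟩; omega
    · simp at h1; simp [h1]
  · obtain ⟨m, hm⟩ := ho
    subst hm
    rw [if_pos (by omega), Cs, coeff_mk, coeff_mk, if_pos ⟨m+1, by ring⟩,
      if_pos ⟨m, by omega⟩]
    have h1 : (2*m+1+1)/2 = m + 1 := by omega
    have h2 : (2*m+1-1)/2 = m := by omega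
    rw [h1, h2]
    have key := Nat.succ_mul_centralBinom_succ m
    have c1 : (2*m+1+1).choose (m+1) = Nat.centralBinom (m+1) := by
      rw [show 2*m+1+1 = 2*(m+1) from by omega, Nat.centralBinom_eq_two_mul_choose]
    have c2 : (2*m+1-1).choose m = Nat.centralBinom m := by
      rw [show 2*m+1-1 = 2*m from by omega, Nat.centralBinom_eq_two_mul_choose]
    rw [c1, c2]
    have : ((m:ℂ)+1) * (Nat.centralBinom (m+1) : ℂ) = 2 * (2*m+1) * Nat.centralBinom m := by
      exact_mod_cast congrArg (Nat.cast : ℕ → ℂ) key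
    push_cast
    linear_combination 2 * this

set_option linter.unnecessarySeqFocus false in
theorem Cs_ode : (1 - 4 * X^2) * d⁄dX ℂ Cs = 4 * X * Cs := by
  have h : d⁄dX ℂ Cs = 4 * X * Cs + 4 * X^2 * d⁄dX ℂ Cs := by
    ext n
    have e4 : (4 : PowerSeries ℂ) = C 4 := by simp [← map_ofNat C 4]
    rw [map_add, coeff_derivative, e4, mul_assoc, coeff_C_mul, mul_assoc, coeff_C_mul,
      coeff_X_pow_mul']
    have hx : (coeff n) (X * Cs) = if 1 ≤ n then coeff (n-1) Cs else 0 := by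
      cases n with
      | zero => simp
      | succ m => rw [coeff_succ_X_mul, if_pos (by omega)]; norm_num
    rw [hx]
    have := Cs_key n
    rcases Nat.lt_or_ge n 2 with h2 | h2
    · interval_cases n <;> simp_all <;> linear_combination this
    · rw [if_pos h2, coeff_derivative]
      rw [if_pos (by omega : 1 ≤ n)] at this
      have hn : n - 2 + 1 = n - 1 := by omega
      rw [hn]
      have hcast : ((n - 2 : ℕ) : ℂ) = (n : ℂ) - 2 := by
        push_cast [Nat.cast_sub (by omega : 2 ≤ n)]; ring
      rw [hcast, if_pos (by omega : 1 ≤ n)]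
      linear_combination this
  linear_combination h

theorem expS_const (f : PowerSeries ℂ) : constantCoeff (expS f) = 1 := by
  rw [← coeff_zero_eq_constantCoeff_apply, expS, coeff_mk]
  simp

theorem coeff_pow_eq_zero {f : PowerSeries ℂ} (hf : constantCoeff f = 0)
    {m k : ℕ} (h : m < k) : PowerSeries.coeff m (f ^ k) = 0 := by
  have hX : (X : PowerSeries ℂ) ^ k ∣ f ^ k := pow_dvd_pow_of_dvd (X_dvd_iff.2 hf) k
  exact (X_pow_dvd_iff.1 hX) m h

theorem expS_deriv (f : PowerSeries ℂ) (hf : constantCoeff f = 0) :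
    d⁄dX ℂ (expS f) = d⁄dX ℂ f * expS f := by
  ext n
  set T : PowerSeries ℂ := ∑ k ∈ Finset.range (n+1), ((Nat.factorial k : ℂ))⁻¹ • f ^ k with hTdef
  have hT : ∀ m, m ≤ n → coeff m (expS f) = coeff m T := by
    intro m hm
    rw [expS, coeff_mk, hTdef]
    have ext1 : ∑ k ∈ Finset.range (m+1), coeff m (f^k)/(Nat.factorial k : ℂ) =
        ∑ k ∈ Finset.range (n+1), coeff m (f^k)/(Nat.factorial k : ℂ) :=
      Finset.sum_subset (Finset.range_subset_range.2 (by omega)) (fun k _ hk2 => by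
        rw [Finset.mem_range, not_lt] at hk2
        rw [coeff_pow_eq_zero hf (by omega), zero_div])
    rw [ext1, map_sum]
    apply Finset.sum_congr rfl
    intro k _
    rw [map_smul, smul_eq_mul, div_eq_inv_mul]
  have hright : coeff n (d⁄dX ℂ f * expS f) = coeff n (d⁄dX ℂ f * T) := by
    rw [coeff_mul, coeff_mul]
    apply Finset.sum_congr rfl
    intro p hp
    replace hp := Finset.HasAntidiagonal.mem_antidiagonal.1 hp
    rw [hT p.2 (by omega)]
  rw [hright, coeff_derivative, expS, coeff_mk, Finset.sum_mul, hTdef, Finset.mul_sum, map_sum]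
  rw [Finset.sum_range_succ' (fun k => coeff (n+1) (f ^ k) / (Nat.factorial k : ℂ) * ((n:ℂ)+1))]
  simp only [pow_zero, coeff_one, Nat.factorial_zero]
  rw [if_neg (Nat.succ_ne_zero n)]
  simp only [zero_div, zero_mul, add_zero]
  apply Finset.sum_congr rfl
  intro i _
  have h1 : coeff (n+1) (f ^ (i+1)) * ((n:ℂ)+1) = ((i:ℂ)+1) * coeff n (f ^ i * d⁄dX ℂ f) := by
    rw [← coeff_derivative, Derivation.leibniz_pow, Nat.add_sub_cancel]
    rw [map_nsmul]
    simp only [smul_eq_mul, nsmul_eq_mul]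
    push_cast
    ring
  have hfac : (((i+1).factorial : ℕ) : ℂ) = ((i:ℂ)+1) * (Nat.factorial i : ℂ) := by
    rw [Nat.factorial_succ]; push_cast; ring
  have hi : ((Nat.factorial i : ℕ) : ℂ) ≠ 0 := Nat.cast_ne_zero.2 (Nat.factorial_ne_zero i)
  have hi1 : ((i:ℂ)+1) ≠ 0 := by
    have := Nat.cast_add_one_ne_zero (R := ℂ) i
    exact_mod_cast this
  rw [div_mul_eq_mul_div, h1, hfac, mul_smul_comm, map_smul, smul_eq_mul,
    mul_comm (d⁄dX ℂ f) (f ^ i)]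
  field_simp

theorem ode_unique (h P Q : PowerSeries ℂ) (hP : d⁄dX ℂ P = h * P) (hQ : d⁄dX ℂ Q = h * Q)
    (h0 : constantCoeff P = constantCoeff Q) : P = Q := by
  ext n
  induction n using Nat.strong_induction_on with
  | _ n ih =>
    match n with
    | 0 => simpa using h0
    | Nat.succ m =>
      have e1 : coeff m (d⁄dX ℂ P) = coeff m (h * P) := by rw [hP]
      have e2 : coeff m (d⁄dX ℂ Q) = coeff m (h * Q) := by rw [hQ]
      rw [coeff_derivative] at e1 e2
      have heq : coeff m (h * P) = coeff m (h * Q) := by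
        rw [coeff_mul, coeff_mul]
        apply Finset.sum_congr rfl
        intro p hp
        replace hp := Finset.HasAntidiagonal.mem_antidiagonal.1 hp
        rw [ih p.2 (by omega)]
      have hm1 : ((m:ℂ)+1) ≠ 0 := by
        have := Nat.cast_add_one_ne_zero (R := ℂ) m
        exact_mod_cast this
      exact mul_right_cancel₀ hm1 (e1.trans (heq.trans e2.symm))

theorem two_ne' : (2 : ℂ⟦X⟧) ≠ 0 := by
  intro hc
  have := congrArg (constantCoeff) hc
  rw [map_ofNat] at this
  norm_num at this

theorem four_ne' : (4 : ℂ⟦X⟧) ≠ 0 := by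
  intro hc
  have := congrArg (constantCoeff) hc
  rw [map_ofNat] at this
  norm_num at this

theorem poly_ne : (1 - 4 * X^2 : ℂ⟦X⟧) ≠ 0 := by
  intro hc
  have := congrArg (constantCoeff) hc
  simp at this

theorem deriv_poly : d⁄dX ℂ (1 - 4*X^2 : ℂ⟦X⟧) = -(8*X) := by
  have h4 : (4 : ℂ⟦X⟧) = C 4 := by simp [← map_ofNat C 4]
  rw [map_sub, h4, Derivation.leibniz, Derivation.leibniz_pow]
  simp [smul_eq_mul]
  rw [← h4]; ring

theorem fdf (f : ℂ⟦X⟧) (hf2 : f^2 = 1 - 4*X^2) : f * d⁄dX ℂ f = -(4*X) := by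
  have h := congrArg (d⁄dX ℂ) hf2
  rw [Derivation.leibniz_pow, deriv_poly] at h
  simp only [smul_eq_mul, nsmul_eq_mul, pow_one] at h
  apply mul_left_cancel₀ two_ne'
  push_cast at h
  linear_combination h

/-- The exponent series `g`. -/
noncomputable def gser : PowerSeries ℂ :=
  PowerSeries.mk fun k => if k = 0 then 0 else -((lau ^ k).coeff (0 : ℤ)) / (k : ℂ)

theorem gser_const : constantCoeff gser = 0 := by
  rw [← coeff_zero_eq_constantCoeff_apply, gser, coeff_mk]
  simp

theorem X_mul_deriv_gser : X * d⁄dX ℂ gser = 1 - Cs := by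
  ext n
  cases n with
  | zero =>
    rw [coeff_mul]
    simp [Cs, coeff_mk]
  | succ m =>
    rw [coeff_succ_X_mul, coeff_derivative, map_sub, gser, coeff_mk,
      if_neg (Nat.succ_ne_zero m), lau_pow_apply_zero, coeff_one,
      if_neg (Nat.succ_ne_zero m), Cs, coeff_mk]
    have hm1 : ((m:ℂ)+1) ≠ 0 := by
      have := Nat.cast_add_one_ne_zero (R := ℂ) m
      exact_mod_cast this
    push_cast
    rw [div_mul_cancel₀ _ hm1]
    ring

theorem fCs_eq_one (f : ℂ⟦X⟧) (hf2 : f^2 = 1 - 4*X^2) (hf1 : constantCoeff f = 1) :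
    f * Cs = 1 := by
  have hB : (1 - 4*X^2) * d⁄dX ℂ f = -(4*X) * f := by
    rw [← hf2]
    linear_combination f * fdf f hf2
  have hE : (1 - 4*X^2) * d⁄dX ℂ (f * Cs) = 0 := by
    rw [Derivation.leibniz, smul_eq_mul, smul_eq_mul]
    linear_combination f * Cs_ode + Cs * hB
  have hD0 : d⁄dX ℂ (f * Cs) = 0 := by
    rcases mul_eq_zero.1 hE with h | h
    · exact absurd h poly_ne
    · exact h
  apply derivative.ext (R := ℂ)
  · rw [hD0, Derivation.map_one_eq_zero]
  · rw [map_mul, hf1, Cs_const, map_one]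
    ring

theorem main_part1 (f : PowerSeries ℂ) (hf2 : f ^ 2 = 1 - 4 * PowerSeries.X ^ 2)
    (hf1 : PowerSeries.constantCoeff f = 1) : Pser = ((1 : ℂ) / 2) • (1 + f) := by
  have hfC := fCs_eq_one f hf2 hf1
  have hXg : X * d⁄dX ℂ gser * f = f - 1 := by
    rw [X_mul_deriv_gser]
    linear_combination -hfC
  have hfne : f ≠ 0 := by
    intro hc
    rw [hc, map_zero] at hf1
    norm_num at hf1
  have hXfne : (X : ℂ⟦X⟧) * f ≠ 0 := mul_ne_zero X_ne_zero hfne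
  have hf' : d⁄dX ℂ f = d⁄dX ℂ gser * (1 + f) := by
    apply mul_left_cancel₀ hXfne
    have hA := fdf f hf2
    linear_combination -(1+f) * hXg + X * hA - hf2
  have hQd : d⁄dX ℂ (((1 : ℂ) / 2) • (1 + f)) = d⁄dX ℂ gser * (((1 : ℂ) / 2) • (1 + f)) := by
    rw [smul_eq_C_mul, Derivation.leibniz, derivative_C, smul_zero, add_zero,
      smul_eq_mul, map_add, Derivation.map_one_eq_zero, zero_add, hf']
    ring
  have hQc : constantCoeff (((1 : ℂ) / 2) • (1 + f)) = 1 := by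
    rw [smul_eq_C_mul, map_mul, constantCoeff_C, map_add, map_one, hf1]
    norm_num
  have hPeq : Pser = expS gser := rfl
  have hPd : d⁄dX ℂ Pser = d⁄dX ℂ gser * Pser := by
    rw [hPeq]; exact expS_deriv gser gser_const
  exact ode_unique (d⁄dX ℂ gser) Pser _ hPd hQd (by rw [hPeq, expS_const, hQc])

theorem Pser_eq_sqrt_form :
    (∀ f : PowerSeries ℂ, f ^ 2 = 1 - 4 * PowerSeries.X ^ 2 →
      PowerSeries.constantCoeff f = 1 → Pser = ((1 : ℂ) / 2) • (1 + f)) ∧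
    Pser ^ 2 - Pser + PowerSeries.X ^ 2 = 0 := by
  constructor
  · exact main_part1
  · -- construct the square root f₀ := (1 - 4X²) * Cs
    set f₀ : ℂ⟦X⟧ := (1 - 4*X^2) * Cs with hf₀
    have hE2 : (1 - 4*X^2) * Cs^2 = 1 := by
      have hD : (1 - 4*X^2) * d⁄dX ℂ ((1 - 4*X^2) * Cs^2) = 0 := by
        rw [Derivation.leibniz, smul_eq_mul, smul_eq_mul, deriv_poly,
          Derivation.leibniz_pow]
        simp only [smul_eq_mul, nsmul_eq_mul, pow_one]
        push_cast
        linear_combination 2 * Cs * (1 - 4*X^2) * Cs_ode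
      have hD0 : d⁄dX ℂ ((1 - 4*X^2) * Cs^2) = 0 := by
        rcases mul_eq_zero.1 hD with h | h
        · exact absurd h poly_ne
        · exact h
      apply derivative.ext (R := ℂ)
      · rw [hD0, Derivation.map_one_eq_zero]
      · rw [map_mul, map_sub, map_one, map_mul, map_pow, map_pow, Cs_const,
          constantCoeff_X]
        norm_num
    have hsq : f₀ ^ 2 = 1 - 4 * X^2 := by
      rw [hf₀]
      linear_combination (1 - 4*X^2) * hE2
    have hc0 : constantCoeff f₀ = 1 := by
      rw [hf₀, map_mul, map_sub, map_one, map_mul, map_pow, Cs_const, constantCoeff_X]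
      norm_num
    have hP := main_part1 f₀ hsq hc0
    have h2P : (2 : ℂ⟦X⟧) * Pser = 1 + f₀ := by
      rw [hP, smul_eq_C_mul]
      have h21 : (2 : ℂ⟦X⟧) * C (1/2) = 1 := by
        rw [← map_ofNat C 2, ← map_mul]
        norm_num
      calc (2 : ℂ⟦X⟧) * (C (1/2) * (1+f₀)) = (2 * C (1/2)) * (1+f₀) := by ring
        _ = 1 + f₀ := by rw [h21, one_mul]
    apply mul_left_cancel₀ four_ne'
    rw [mul_zero]
    linear_combination (2*Pser + 1 + f₀) * h2P - 2 * h2P + hsq
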